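/- Let F be a linearly ordered field whose Cartesian plane satisfies the following (H*6)-property: for all P₁, P₂ ∈ F² and all lines ℓ₁ = (a₁, b₁, c₁), ℓ₂ = (a₂, b₂, c₂) with a_i² + b_i² ≠ 0 such that P₁ ∉ ℓ₁, P₂ ∉ ℓ₂, a₁b₂ − a₂b₁ ≠ 0, and (P₁ ≠ P₂ or ℓ₁, ℓ₂ not proportional), there exists a line ℓ₃ = (a₃, b₃, c₃) with a₃² + b₃² ≠ 0 whose reflection sends P₁ to a point of ℓ₁ and P₂ to a point of ℓ₂. Then every element of F has a cube root: for all r ∈ F there exists s ∈ F with s³ = r. -/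

import Mathlib

/-- The reflection of a point `P` across the line `a·x + b·y + c = 0`
(meaningful when the line is non-isotropic, i.e. `a² + b² ≠ 0`):
`refl P = P − (2(a·P₁ + b·P₂ + c)/(a² + b²))·(a, b)`. -/
def reflLine {F : Type*} [Field F] (a b c : F) (P : F × F) : F × F :=
  (P.1 - 2 * (a * P.1 + b * P.2 + c) / (a ^ 2 + b ^ 2) * a,
   P.2 - 2 * (a * P.1 + b * P.2 + c) / (a ^ 2 + b ^ 2) * b)

/-- Two lines `(a₁, b₁, c₁)` and `(a₂, b₂, c₂)` are proportional if one is a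
nonzero scalar multiple of the other. -/
def PropLine {F : Type*} [Field F] (a₁ b₁ c₁ a₂ b₂ c₂ : F) : Prop :=
  ∃ k : F, k ≠ 0 ∧ a₂ = k * a₁ ∧ b₂ = k * b₁ ∧ c₂ = k * c₁

/-- If the plane over a linearly ordered field `F` satisfies the
(H*6)-property, then every element of `F` has a cube root. -/
theorem stmt_15 {F : Type*} [Field F] [LinearOrder F] [IsStrictOrderedRing F]
    (hH6 : ∀ (P₁ P₂ : F × F) (a₁ b₁ c₁ a₂ b₂ c₂ : F),
      a₁ ^ 2 + b₁ ^ 2 ≠ 0 → a₂ ^ 2 + b₂ ^ 2 ≠ 0 →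
      a₁ * P₁.1 + b₁ * P₁.2 + c₁ ≠ 0 →
      a₂ * P₂.1 + b₂ * P₂.2 + c₂ ≠ 0 →
      a₁ * b₂ - a₂ * b₁ ≠ 0 →
      (P₁ ≠ P₂ ∨ ¬ PropLine a₁ b₁ c₁ a₂ b₂ c₂) →
      ∃ a₃ b₃ c₃ : F, a₃ ^ 2 + b₃ ^ 2 ≠ 0 ∧
        a₁ * (reflLine a₃ b₃ c₃ P₁).1 + b₁ * (reflLine a₃ b₃ c₃ P₁).2 + c₁ = 0 ∧
        a₂ * (reflLine a₃ b₃ c₃ P₂).1 + b₂ * (reflLine a₃ b₃ c₃ P₂).2 + c₂ = 0) :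
    ∀ r : F, ∃ s : F, s ^ 3 = r := by
  intro r
  rcases eq_or_ne r 0 with rfl | hr
  · exact ⟨0, by ring⟩
  obtain ⟨a, b, c, hab, h1, h2⟩ := hH6 (r, 1/2) (r/2, 1) 1 0 0 0 1 0
    (by norm_num) (by norm_num) (by simpa using hr) (by norm_num) (by norm_num)
    (Or.inr (by rintro ⟨k, hk, h, h', _⟩; simp at h h'))
  simp only [reflLine] at h1 h2
  have h1' : r * (a ^ 2 + b ^ 2) = 2 * (a * r + b * (1/2) + c) * a := by
    field_simp at h1; linarith
  have h2' : (a ^ 2 + b ^ 2) = 2 * (a * (r/2) + b * 1 + c) * b := by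
    field_simp at h2; linarith
  have hb : b ≠ 0 := by
    rintro rfl
    have ha : a = 0 := by nlinarith [sq_nonneg a]
    simp [ha] at hab
  have key : a ^ 3 = r * b ^ 3 := by linear_combination a * h2' - b * h1'
  refine ⟨a / b, ?_⟩
  field_simp
  linear_combination key
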